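/- (Lemma 2, telescoped.) Consider a T-query discrimination procedure for n×n unitaries U₁, U₂ with an m-dimensional ancilla, given by a unit vector φ₀ and unitaries W₀, …, W_T on ℂⁿ ⊗ ℂᵐ; let φᵢᵏ = W_k(Uᵢ ⊗ I)W_{k−1}(Uᵢ ⊗ I)⋯W₁(Uᵢ ⊗ I)W₀φ₀ for i = 1, 2 and 0 ≤ k ≤ T, and set D_k = 2·√(1 − |⟨φ₁ᵏ, φ₂ᵏ⟩|²). Then D₀ = 0 and D_T ≤ 2T·√(1 − F(U₁, U₂)²). -/

import Mathlib

open Matrix Kronecker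

/-- The fidelity of two unitary matrices: the infimum of `|⟨ψ, U₁†U₂ ψ⟩|` over
unit vectors `ψ`. -/
noncomputable def unitaryFidelity (n : ℕ) (U₁ U₂ : Matrix (Fin n) (Fin n) ℂ) : ℝ :=
  sInf { r : ℝ | ∃ ψ : Fin n → ℂ, star ψ ⬝ᵥ ψ = 1 ∧
    r = ‖star ψ ⬝ᵥ ((U₁ᴴ * U₂) *ᵥ ψ)‖ }

set_option linter.unusedSectionVars false
set_option linter.unusedVariables false

namespace TDaux
variable {ι : Type*} [Fintype ι] [DecidableEq ι]
noncomputable def eu (v : ι → ℂ) : EuclideanSpace ℂ ι := (WithLp.equiv 2 _).symm v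

lemma ip_eq_inner (a b : ι → ℂ) : star a ⬝ᵥ b = (inner ℂ (eu a) (eu b) : ℂ) := by
  simp [eu, PiLp.inner_apply, dotProduct, mul_comm]

lemma ip_self_eq_normSq (a : ι → ℂ) : star a ⬝ᵥ a = ((‖eu a‖ ^ 2 : ℝ) : ℂ) := by
  rw [ip_eq_inner, inner_self_eq_norm_sq_to_K]; norm_cast

lemma abs_ip_le (a b : ι → ℂ) : ‖star a ⬝ᵥ b‖ ≤ ‖eu a‖ * ‖eu b‖ := by
  rw [ip_eq_inner]; exact norm_inner_le_norm (𝕜 := ℂ) _ _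

lemma norm_eq_one_of_unit {a : ι → ℂ} (ha : star a ⬝ᵥ a = 1) : ‖eu a‖ = 1 := by
  have := ip_self_eq_normSq a
  rw [ha] at this
  have h2 : (‖eu a‖ ^ 2 : ℝ) = 1 := by exact_mod_cast this.symm
  nlinarith [norm_nonneg (eu a)]

lemma abs_ip_le_one {a b : ι → ℂ} (ha : star a ⬝ᵥ a = 1) (hb : star b ⬝ᵥ b = 1) :
    ‖star a ⬝ᵥ b‖ ≤ 1 := by
  have := abs_ip_le a b
  rw [norm_eq_one_of_unit ha, norm_eq_one_of_unit hb] at this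
  simpa using this

lemma conj_ip (a b : ι → ℂ) : (starRingEnd ℂ) (star a ⬝ᵥ b) = star b ⬝ᵥ a := by
  simp [dotProduct, Finset.mul_sum, map_sum, mul_comm]

lemma norm_of_normSq {a : ι → ℂ} {r : ℝ} (hr : 0 ≤ r) (h : star a ⬝ᵥ a = (r : ℂ)) :
    ‖eu a‖ = Real.sqrt r := by
  have := ip_self_eq_normSq a
  rw [h] at this
  have h2 : r = (‖eu a‖ ^ 2 : ℝ) := by exact_mod_cast this
  rw [h2, Real.sqrt_sq (norm_nonneg _)]

/-- The key "sine triangle inequality" for three unit vectors. -/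
lemma tri {a b c : ι → ℂ} (ha : star a ⬝ᵥ a = 1) (hb : star b ⬝ᵥ b = 1)
    (hc : star c ⬝ᵥ c = 1) :
    Real.sqrt (1 - ‖star a ⬝ᵥ c‖ ^ 2) ≤
      Real.sqrt (1 - ‖star a ⬝ᵥ b‖ ^ 2) +
      Real.sqrt (1 - ‖star b ⬝ᵥ c‖ ^ 2) := by
  set x := ‖star a ⬝ᵥ b‖ with hxdef
  set y := ‖star b ⬝ᵥ c‖ with hydef
  set z := ‖star a ⬝ᵥ c‖ with hzdef
  have hx0 : 0 ≤ x := norm_nonneg _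
  have hy0 : 0 ≤ y := norm_nonneg _
  have hz0 : 0 ≤ z := norm_nonneg _
  have hx1 : x ≤ 1 := abs_ip_le_one ha hb
  have hy1 : y ≤ 1 := abs_ip_le_one hb hc
  have hz1 : z ≤ 1 := abs_ip_le_one ha hc
  set s := Real.sqrt (1 - x ^ 2) with hsdef
  set s' := Real.sqrt (1 - y ^ 2) with hs'def
  have hs0 : 0 ≤ s := Real.sqrt_nonneg _
  have hs'0 : 0 ≤ s' := Real.sqrt_nonneg _
  have hs2 : s ^ 2 = 1 - x ^ 2 := Real.sq_sqrt (by nlinarith)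
  have hs'2 : s' ^ 2 = 1 - y ^ 2 := Real.sq_sqrt (by nlinarith)
  -- key projection bound : z ≥ x*y - s*s'
  have key : x * y - s * s' ≤ z := by
    set p := star b ⬝ᵥ a with hp
    set q := star b ⬝ᵥ c with hq
    set a' := a - p • b with ha'
    set c' := c - q • b with hc'
    have hconjp : (starRingEnd ℂ) p = star a ⬝ᵥ b := conj_ip b a
    have habsp : ‖p‖ = x := by
      rw [hxdef, ← hconjp, Complex.norm_conj]
    have h1 : star a' ⬝ᵥ c' = star a ⬝ᵥ c - (star a ⬝ᵥ b) * (star b ⬝ᵥ c) := by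
      simp only [ha', hc', star_sub, star_smul, sub_dotProduct, dotProduct_sub,
        smul_dotProduct, dotProduct_smul, smul_eq_mul, hb, hconjp, mul_one]
      simp only [Complex.star_def, hconjp, hq]
      ring
    have hpp : p * (starRingEnd ℂ) p = (x : ℂ) ^ 2 := by
      rw [Complex.mul_conj, ← Complex.sq_norm, habsp]; push_cast; ring
    have h2 : star a' ⬝ᵥ a' = ((1 - x ^ 2 : ℝ) : ℂ) := by
      have expand : star a' ⬝ᵥ a' = star a ⬝ᵥ a - (starRingEnd ℂ) p * (star b ⬝ᵥ a)
          - p * (star a ⬝ᵥ b) + (starRingEnd ℂ) p * p * (star b ⬝ᵥ b) := by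
        simp only [ha', star_sub, star_smul, sub_dotProduct, dotProduct_sub,
          smul_dotProduct, dotProduct_smul, smul_eq_mul, Complex.star_def]
        ring
      rw [expand, ha, hb, ← hp, mul_one]
      rw [show star a ⬝ᵥ b = (starRingEnd ℂ) p from hconjp.symm]
      push_cast
      linear_combination -hpp
    have habsq : ‖q‖ = y := rfl
    have hqq : q * (starRingEnd ℂ) q = (y : ℂ) ^ 2 := by
      rw [Complex.mul_conj, ← Complex.sq_norm, habsq]; push_cast; ring
    have hconjq : (starRingEnd ℂ) q = star c ⬝ᵥ b := conj_ip b c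
    have h3 : star c' ⬝ᵥ c' = ((1 - y ^ 2 : ℝ) : ℂ) := by
      have expand : star c' ⬝ᵥ c' = star c ⬝ᵥ c - (starRingEnd ℂ) q * (star b ⬝ᵥ c)
          - q * (star c ⬝ᵥ b) + (starRingEnd ℂ) q * q * (star b ⬝ᵥ b) := by
        simp only [hc', star_sub, star_smul, sub_dotProduct, dotProduct_sub,
          smul_dotProduct, dotProduct_smul, smul_eq_mul, Complex.star_def]
        ring
      rw [expand, hc, hb, ← hq, mul_one]
      rw [show star c ⬝ᵥ b = (starRingEnd ℂ) q from hconjq.symm]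
      push_cast
      linear_combination -hqq
    have hna : ‖eu a'‖ = s := by
      rw [hsdef]; exact norm_of_normSq (by nlinarith) h2
    have hnc : ‖eu c'‖ = s' := by
      rw [hs'def]; exact norm_of_normSq (by nlinarith) h3
    have hcs : ‖star a' ⬝ᵥ c'‖ ≤ s * s' := by
      have := abs_ip_le a' c'
      rwa [hna, hnc] at this
    rw [h1] at hcs
    have htri : x * y - z ≤ s * s' := by
      have h4 : x * y = ‖(star a ⬝ᵥ b) * (star b ⬝ᵥ c)‖ := by
        rw [norm_mul]
      have h5 : ‖(star a ⬝ᵥ b) * (star b ⬝ᵥ c)‖ - ‖star a ⬝ᵥ c‖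
          ≤ ‖star a ⬝ᵥ c - (star a ⬝ᵥ b) * (star b ⬝ᵥ c)‖ := by
        calc ‖(star a ⬝ᵥ b) * (star b ⬝ᵥ c)‖ - ‖star a ⬝ᵥ c‖
            ≤ ‖(star a ⬝ᵥ b) * (star b ⬝ᵥ c) - star a ⬝ᵥ c‖ := norm_sub_norm_le _ _
          _ = ‖star a ⬝ᵥ c - (star a ⬝ᵥ b) * (star b ⬝ᵥ c)‖ := norm_sub_rev _ _
      rw [← h4] at h5
      linarith [hcs]
    linarith
  -- conclude
  have hle1 : Real.sqrt (1 - z ^ 2) ≤ 1 := by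
    calc Real.sqrt (1 - z ^ 2) ≤ Real.sqrt 1 := Real.sqrt_le_sqrt (by nlinarith)
      _ = 1 := Real.sqrt_one
  by_cases hss : 1 ≤ s + s'
  · linarith
  · push_neg at hss
    have hxy : s * s' ≤ x * y := by nlinarith
    have hz2 : (x * y - s * s') ^ 2 ≤ z ^ 2 := by nlinarith
    have hid : 1 - z ^ 2 ≤ (x * s' + y * s) ^ 2 := by nlinarith
    calc Real.sqrt (1 - z ^ 2) ≤ Real.sqrt ((x * s' + y * s) ^ 2) := Real.sqrt_le_sqrt hid
      _ = x * s' + y * s := Real.sqrt_sq (by positivity)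
      _ ≤ s + s' := by
          have h6 : x * s' ≤ s' := mul_le_of_le_one_left hs'0 hx1
          have h7 : y * s ≤ s := mul_le_of_le_one_left hs0 hy1
          linarith

lemma eu_ne_zero {v : ι → ℂ} (hv : v ≠ 0) : eu v ≠ 0 := by
  intro h0
  apply hv
  have := congrArg (⇑(WithLp.equiv 2 (ι → ℂ))) h0
  simpa [eu] using this

/-- The numerical range of a matrix. -/
def numRange (B : Matrix ι ι ℂ) : Set ℂ :=
  {w | ∃ ψ : ι → ℂ, star ψ ⬝ᵥ ψ = 1 ∧ w = star ψ ⬝ᵥ (B *ᵥ ψ)}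

lemma mem_numRange_of_ne_zero (B : Matrix ι ι ℂ) {v : ι → ℂ} (hv : v ≠ 0) :
    (star v ⬝ᵥ (B *ᵥ v)) / (star v ⬝ᵥ v) ∈ numRange B := by
  set r := ‖eu v‖ with hr
  have hr0 : 0 < r := norm_pos_iff.mpr (eu_ne_zero hv)
  have hrne : (r : ℂ) ≠ 0 := by exact_mod_cast hr0.ne'
  have hstar : star ((r : ℂ))⁻¹ = ((r : ℂ))⁻¹ := by
    rw [Complex.star_def, ← Complex.ofReal_inv, Complex.conj_ofReal]
  have hipv : star v ⬝ᵥ v = ((r : ℂ)) ^ 2 := by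
    rw [ip_self_eq_normSq, ← hr]; push_cast; ring
  refine ⟨((r : ℂ))⁻¹ • v, ?_, ?_⟩
  · rw [star_smul, smul_dotProduct, dotProduct_smul, smul_eq_mul, smul_eq_mul, hipv, hstar]
    field_simp
  · rw [star_smul, smul_dotProduct, mulVec_smul, dotProduct_smul, smul_eq_mul, smul_eq_mul,
      hipv, hstar]
    rw [div_eq_iff (pow_ne_zero 2 hrne)]
    field_simp

lemma ip_expand (M : Matrix ι ι ℂ) (c₁ c₂ : ℂ) (x y : ι → ℂ) :
    star (c₁ • x + c₂ • y) ⬝ᵥ (M *ᵥ (c₁ • x + c₂ • y)) =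
      star c₁ * c₁ * (star x ⬝ᵥ (M *ᵥ x)) + star c₁ * c₂ * (star x ⬝ᵥ (M *ᵥ y))
      + star c₂ * c₁ * (star y ⬝ᵥ (M *ᵥ x)) + star c₂ * c₂ * (star y ⬝ᵥ (M *ᵥ y)) := by
  simp only [star_add, star_smul, add_dotProduct, dotProduct_add, smul_dotProduct,
    dotProduct_smul, mulVec_add, mulVec_smul, smul_eq_mul]
  ring

set_option maxHeartbeats 1000000 in
lemma ip_expand' (c₁ c₂ : ℂ) (x y : ι → ℂ) :
    star (c₁ • x + c₂ • y) ⬝ᵥ (c₁ • x + c₂ • y) =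
      star c₁ * c₁ * (star x ⬝ᵥ x) + star c₁ * c₂ * (star x ⬝ᵥ y)
      + star c₂ * c₁ * (star y ⬝ᵥ x) + star c₂ * c₂ * (star y ⬝ᵥ y) := by
  simp only [star_add, star_smul, add_dotProduct, dotProduct_add, smul_dotProduct,
    dotProduct_smul, smul_eq_mul]
  ring

theorem numRange_convex (B : Matrix ι ι ℂ) : Convex ℝ (numRange B) := by
  rintro z₀ ⟨a, ha, rfl⟩ z₁ ⟨b, hb, rfl⟩ sR tR hsR htR hst
  set za := star a ⬝ᵥ (B *ᵥ a) with hza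
  set zb := star b ⬝ᵥ (B *ᵥ b) with hzb
  by_cases hz : za = zb
  · refine ⟨a, ha, ?_⟩
    rw [← hz, Complex.real_smul, Complex.real_smul, ← add_mul]
    norm_cast
    rw [hst, Complex.ofReal_one, one_mul]
  -- main case
  have hs1 : sR ≤ 1 := by linarith
  set ζ := za - zb with hζ
  have hζ0 : ζ ≠ 0 := sub_ne_zero.mpr hz
  set M := ζ⁻¹ • (B - zb • (1 : Matrix ι ι ℂ)) with hM
  have ipM : ∀ ψ : ι → ℂ, star ψ ⬝ᵥ (M *ᵥ ψ)
      = ζ⁻¹ * (star ψ ⬝ᵥ (B *ᵥ ψ) - zb * (star ψ ⬝ᵥ ψ)) := by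
    intro ψ
    rw [hM, smul_mulVec, sub_mulVec, smul_mulVec, one_mulVec,
      dotProduct_smul, dotProduct_sub, dotProduct_smul, smul_eq_mul, smul_eq_mul]
  have hMa : star a ⬝ᵥ (M *ᵥ a) = 1 := by
    rw [ipM, ha, mul_one, ← hza, ← hζ]
    field_simp
  have hMb : star b ⬝ᵥ (M *ᵥ b) = 0 := by
    rw [ipM, hb, mul_one, ← hzb]
    simp
  -- choose the phase
  set p := star a ⬝ᵥ (M *ᵥ b) with hp
  set qq := star b ⬝ᵥ (M *ᵥ a) with hqq
  set d := p - (starRingEnd ℂ) qq with hd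
  set ε : ℂ := if d = 0 then 1 else d / ((‖d‖ : ℝ) : ℂ) with hε
  have habsd : d ≠ 0 → ((‖d‖ : ℝ) : ℂ) ≠ 0 := by
    intro h
    exact_mod_cast (norm_ne_zero_iff.mpr h)
  have hεabs : ‖ε‖ = 1 := by
    rw [hε]
    split_ifs with h
    · simp
    · rw [norm_div, Complex.norm_real, Real.norm_of_nonneg (norm_nonneg d)]
      exact div_self (norm_ne_zero_iff.mpr h)
  have hεε : (starRingEnd ℂ) ε * ε = 1 := by
    rw [← Complex.normSq_eq_conj_mul_self, ← Complex.sq_norm, hεabs]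
    norm_num
  have hreal : (starRingEnd ℂ) ε * d = ((‖d‖ : ℝ) : ℂ) := by
    rw [hε]
    split_ifs with h
    · simp [h]
    · rw [map_div₀, Complex.conj_ofReal, div_mul_eq_mul_div, Complex.conj_mul',
        div_eq_iff (habsd h)]
      norm_cast
      ring
  have hreal2 : ε * (starRingEnd ℂ) d = ((‖d‖ : ℝ) : ℂ) := by
    have h2 := congrArg (starRingEnd ℂ) hreal
    rw [_root_.map_mul, Complex.conj_conj, Complex.conj_ofReal] at h2
    linear_combination h2
  set γ := (starRingEnd ℂ) ε * p + ε * qq with hγ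
  have hγconj : (starRingEnd ℂ) γ = γ := by
    have hd1 : (starRingEnd ℂ) qq = p - d := by rw [hd]; ring
    have hd2 : (starRingEnd ℂ) p = (starRingEnd ℂ) d + qq := by
      have := congrArg (starRingEnd ℂ) hd1
      simp only [map_sub, Complex.conj_conj] at this
      linear_combination -this
    rw [hγ, map_add, _root_.map_mul, _root_.map_mul, Complex.conj_conj, hd1, hd2]
    linear_combination hreal2 - hreal
  obtain ⟨γr, hγr⟩ : ∃ γr : ℝ, γ = (γr : ℂ) := ⟨γ.re, (Complex.conj_eq_iff_re.mp hγconj).symm⟩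
  set δ := (starRingEnd ℂ) ε * (star a ⬝ᵥ b) + ε * (star b ⬝ᵥ a) with hδ
  have hδconj : (starRingEnd ℂ) δ = δ := by
    rw [hδ, map_add, _root_.map_mul, _root_.map_mul, Complex.conj_conj, conj_ip, conj_ip]
    ring
  obtain ⟨δr, hδr⟩ : ∃ δr : ℝ, δ = (δr : ℂ) := ⟨δ.re, (Complex.conj_eq_iff_re.mp hδconj).symm⟩
  -- the path
  set v : ℝ → (ι → ℂ) := fun u => ((u : ℝ) : ℂ) • (ε • a) + (((1 - u : ℝ)) : ℂ) • b with hv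
  have hMεa : star (ε • a) ⬝ᵥ (M *ᵥ (ε • a)) = 1 := by
    rw [star_smul, smul_dotProduct, mulVec_smul, dotProduct_smul, smul_eq_mul, smul_eq_mul, hMa]
    rw [Complex.star_def]
    linear_combination hεε
  have hεa_unit : star (ε • a) ⬝ᵥ (ε • a) = 1 := by
    rw [star_smul, smul_dotProduct, dotProduct_smul, smul_eq_mul, smul_eq_mul, ha]
    rw [Complex.star_def]
    linear_combination hεε
  have hMεab : star (ε • a) ⬝ᵥ (M *ᵥ b) = (starRingEnd ℂ) ε * p := by
    rw [star_smul, smul_dotProduct, smul_eq_mul, hp, Complex.star_def]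
  have hMbεa : star b ⬝ᵥ (M *ᵥ (ε • a)) = ε * qq := by
    rw [mulVec_smul, dotProduct_smul, smul_eq_mul, hqq]
  have hab : star (ε • a) ⬝ᵥ b = (starRingEnd ℂ) ε * (star a ⬝ᵥ b) := by
    rw [star_smul, smul_dotProduct, smul_eq_mul, Complex.star_def]
  have hba : star b ⬝ᵥ (ε • a) = ε * (star b ⬝ᵥ a) := by
    rw [dotProduct_smul, smul_eq_mul]
  have num_eq : ∀ u : ℝ, star (v u) ⬝ᵥ (M *ᵥ (v u))
      = (((u ^ 2 + u * (1 - u) * γr : ℝ)) : ℂ) := by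
    intro u
    rw [hv]
    rw [ip_expand M (((u : ℝ)) : ℂ) ((((1 - u : ℝ))) : ℂ) (ε • a) b]
    rw [hMεa, hMεab, hMbεa, hMb]
    simp only [Complex.star_def, Complex.conj_ofReal]
    have : ((u:ℂ)) * (((1 - u : ℝ)) : ℂ) * ((starRingEnd ℂ) ε * p)
        + (((1 - u : ℝ)) : ℂ) * (u:ℂ) * (ε * qq) = ((u * (1 - u) : ℝ) : ℂ) * γ := by
      rw [hγ]; push_cast; ring
    push_cast
    rw [hγr] at this
    push_cast at this
    linear_combination this
  have den_eq : ∀ u : ℝ, star (v u) ⬝ᵥ (v u)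
      = (((u ^ 2 + (1 - u) ^ 2 + u * (1 - u) * δr : ℝ)) : ℂ) := by
    intro u
    rw [hv]
    rw [ip_expand' (((u : ℝ)) : ℂ) ((((1 - u : ℝ))) : ℂ) (ε • a) b]
    rw [hεa_unit, hab, hba, hb]
    simp only [Complex.star_def, Complex.conj_ofReal]
    have : ((u:ℂ)) * (((1 - u : ℝ)) : ℂ) * ((starRingEnd ℂ) ε * (star a ⬝ᵥ b))
        + (((1 - u : ℝ)) : ℂ) * (u:ℂ) * (ε * (star b ⬝ᵥ a)) = ((u * (1 - u) : ℝ) : ℂ) * δ := by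
      rw [hδ]; push_cast; ring
    push_cast
    rw [hδr] at this
    push_cast at this
    linear_combination this
  -- the path vector is never zero
  have hvne : ∀ u : ℝ, v u ≠ 0 := by
    intro u h0
    by_cases hu : (u : ℂ) = 0
    · have hu' : u = 0 := by exact_mod_cast hu
      rw [hv] at h0
      simp only [hu', Complex.ofReal_zero, zero_smul, zero_add, sub_zero,
        Complex.ofReal_one, one_smul] at h0
      rw [h0] at hb
      simp at hb
    · -- ε • a = μ • b
      have h1 : ((u:ℝ) : ℂ) • (ε • a) = (-(((1 - u : ℝ)) : ℂ)) • b := by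
        rw [neg_smul]
        exact eq_neg_of_add_eq_zero_left h0
      have h2 : ε • a = ((u:ℂ)⁻¹ * (-(((1 - u : ℝ)) : ℂ))) • b := by
        have h3 := congrArg (fun w => ((u:ℂ))⁻¹ • w) h1
        simp only [smul_smul] at h3
        rw [← mul_assoc, inv_mul_cancel₀ hu, one_mul] at h3
        exact h3
      set μ := (u:ℂ)⁻¹ * (-(((1 - u : ℝ)) : ℂ)) with hμ
      have hcontr : (1 : ℂ) = 0 := by
        rw [← hMεa, h2, star_smul, smul_dotProduct, mulVec_smul, dotProduct_smul,
          smul_eq_mul, smul_eq_mul, hMb]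
        ring
      exact one_ne_zero hcontr
  -- positivity of the denominator
  have hpos : ∀ u : ℝ, 0 < u ^ 2 + (1 - u) ^ 2 + u * (1 - u) * δr := by
    intro u
    have h1 := den_eq u
    rw [ip_self_eq_normSq] at h1
    have h2 : ‖eu (v u)‖ ^ 2 = u ^ 2 + (1 - u) ^ 2 + u * (1 - u) * δr := by
      exact_mod_cast h1
    rw [← h2]
    have h3 : 0 < ‖eu (v u)‖ := norm_pos_iff.mpr (eu_ne_zero (hvne u))
    positivity
  -- the real function and IVT
  set f : ℝ → ℝ := fun u => (u ^ 2 + u * (1 - u) * γr) /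
    (u ^ 2 + (1 - u) ^ 2 + u * (1 - u) * δr) with hf
  have hcont : Continuous f := by
    apply Continuous.div
    · fun_prop
    · fun_prop
    · intro u
      exact (hpos u).ne'
  have hf0 : f 0 = 0 := by norm_num [hf]
  have hf1 : f 1 = 1 := by norm_num [hf]
  have hsub : Set.Icc (f 0) (f 1) ⊆ f '' Set.Icc (0:ℝ) 1 :=
    intermediate_value_Icc (by norm_num) hcont.continuousOn
  obtain ⟨u, hu, hfu⟩ : ∃ u ∈ Set.Icc (0:ℝ) 1, f u = sR := by
    have : sR ∈ Set.Icc (f 0) (f 1) := by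
      rw [hf0, hf1]
      exact ⟨hsR, hs1⟩
    obtain ⟨u, hu, hfu⟩ := hsub this
    exact ⟨u, hu, hfu⟩
  -- conclude
  set den : ℝ := u ^ 2 + (1 - u) ^ 2 + u * (1 - u) * δr with hden
  have hdenpos := hpos u
  have hnum : u ^ 2 + u * (1 - u) * γr = sR * den := by
    rw [← hfu, hf]
    field_simp
    rw [hden]
  have key : (star (v u) ⬝ᵥ (B *ᵥ (v u))) / (star (v u) ⬝ᵥ (v u))
      = sR • za + tR • zb := by
    have hB : star (v u) ⬝ᵥ (B *ᵥ (v u))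
        = zb * (star (v u) ⬝ᵥ (v u)) + ζ * (star (v u) ⬝ᵥ (M *ᵥ (v u))) := by
      rw [ipM]
      field_simp
      ring
    rw [hB, num_eq, den_eq, ← hden, hnum]
    have hdc : ((den : ℝ) : ℂ) ≠ 0 := by exact_mod_cast hdenpos.ne'
    rw [Complex.real_smul, Complex.real_smul]
    have htR' : (tR : ℂ) = 1 - (sR : ℂ) := by
      have : tR = 1 - sR := by linarith
      rw [this]; push_cast; ring
    rw [htR', hζ]
    field_simp
    push_cast
    ring
  rw [← key]
  exact mem_numRange_of_ne_zero B (hvne u)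

lemma kron_conjTranspose {n m : ℕ} (A : Matrix (Fin n) (Fin n) ℂ) (B : Matrix (Fin m) (Fin m) ℂ) :
    (A ⊗ₖ B)ᴴ = Aᴴ ⊗ₖ Bᴴ := by
  ext ⟨i, j⟩ ⟨k, l⟩
  simp [conjTranspose_apply, kroneckerMap_apply]

lemma kron_one_unitary {n m : ℕ} {U : Matrix (Fin n) (Fin n) ℂ}
    (hU : U ∈ Matrix.unitaryGroup (Fin n) ℂ) :
    (U ⊗ₖ (1 : Matrix (Fin m) (Fin m) ℂ)) ∈ Matrix.unitaryGroup (Fin n × Fin m) ℂ := by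
  rw [Matrix.mem_unitaryGroup_iff']
  rw [Matrix.star_eq_conjTranspose, kron_conjTranspose, conjTranspose_one,
    ← Matrix.mul_kronecker_mul, Matrix.one_mul, ← Matrix.star_eq_conjTranspose,
    Matrix.mem_unitaryGroup_iff'.mp hU, Matrix.one_kronecker_one]

/-- the mixed kronecker product combination -/
lemma kron_mul {n m : ℕ} (A B : Matrix (Fin n) (Fin n) ℂ) :
    (A ⊗ₖ (1 : Matrix (Fin m) (Fin m) ℂ))ᴴ * (B ⊗ₖ (1 : Matrix (Fin m) (Fin m) ℂ))
      = (Aᴴ * B) ⊗ₖ (1 : Matrix (Fin m) (Fin m) ℂ) := by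
  rw [kron_conjTranspose, conjTranspose_one, ← Matrix.mul_kronecker_mul, Matrix.one_mul]

/-- block column of a vector on a product index -/
def col' {n m : ℕ} (φ : Fin n × Fin m → ℂ) (j : Fin m) : Fin n → ℂ := fun i => φ (i, j)

lemma block_sum_ip {n m : ℕ} (V : Matrix (Fin n) (Fin n) ℂ) (φ : Fin n × Fin m → ℂ) :
    star φ ⬝ᵥ ((V ⊗ₖ (1 : Matrix (Fin m) (Fin m) ℂ)) *ᵥ φ)
      = ∑ j : Fin m, star (col' φ j) ⬝ᵥ (V *ᵥ col' φ j) := by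
  simp only [dotProduct, Matrix.mulVec, Fintype.sum_prod_type, col',
    kroneckerMap_apply, Pi.star_apply, Matrix.one_apply, mul_ite, mul_one, mul_zero,
    ite_mul, zero_mul, Finset.sum_ite_eq, Finset.mem_univ, if_true]
  rw [Finset.sum_comm]


lemma ip_mulVec_unitary {M : Matrix ι ι ℂ} (hM : M ∈ Matrix.unitaryGroup ι ℂ)
    (a b : ι → ℂ) : star (M *ᵥ a) ⬝ᵥ (M *ᵥ b) = star a ⬝ᵥ b := by
  rw [star_mulVec, dotProduct_mulVec, vecMul_vecMul, ← Matrix.star_eq_conjTranspose,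
    (Matrix.mem_unitaryGroup_iff'.mp hM), vecMul_one]

lemma exists_unit [Nonempty ι] : ∃ ψ : ι → ℂ, star ψ ⬝ᵥ ψ = 1 := by
  refine ⟨Pi.single (Classical.arbitrary ι) 1, ?_⟩
  simp [dotProduct, Pi.single_apply, apply_ite]

lemma numRange_nonempty [Nonempty ι] (B : Matrix ι ι ℂ) : (numRange B).Nonempty := by
  obtain ⟨ψ, hψ⟩ := exists_unit (ι := ι)
  exact ⟨star ψ ⬝ᵥ (B *ᵥ ψ), ψ, hψ, rfl⟩

lemma block_sum_self {n m : ℕ} (φ : Fin n × Fin m → ℂ) :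
    star φ ⬝ᵥ φ = ∑ j : Fin m, star (col' φ j) ⬝ᵥ (col' φ j) := by
  simp only [dotProduct, Fintype.sum_prod_type, col', Pi.star_apply]
  rw [Finset.sum_comm]

lemma step_eq {n m : ℕ} (A B : Matrix (Fin n) (Fin n) ℂ) (x y : Fin n × Fin m → ℂ) :
    star ((A ⊗ₖ (1 : Matrix (Fin m) (Fin m) ℂ)) *ᵥ x) ⬝ᵥ
      ((B ⊗ₖ (1 : Matrix (Fin m) (Fin m) ℂ)) *ᵥ y)
      = star x ⬝ᵥ (((Aᴴ * B) ⊗ₖ (1 : Matrix (Fin m) (Fin m) ℂ)) *ᵥ y) := by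
  rw [star_mulVec, dotProduct_mulVec, vecMul_vecMul, ← kron_mul, ← dotProduct_mulVec]

lemma fidelity_nonneg (n : ℕ) (U₁ U₂ : Matrix (Fin n) (Fin n) ℂ) :
    0 ≤ unitaryFidelity n U₁ U₂ := by
  apply Real.sInf_nonneg
  rintro r ⟨ψ, hψ, rfl⟩
  exact norm_nonneg _

lemma fidelity_le {n m : ℕ} (U₁ U₂ : Matrix (Fin n) (Fin n) ℂ)
    {φ : Fin n × Fin m → ℂ} (hφ : star φ ⬝ᵥ φ = 1) :
    unitaryFidelity n U₁ U₂ ≤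
      ‖star φ ⬝ᵥ (((U₁ᴴ * U₂) ⊗ₖ (1 : Matrix (Fin m) (Fin m) ℂ)) *ᵥ φ)‖ := by
  set V := U₁ᴴ * U₂ with hV
  have hprod : Nonempty (Fin n × Fin m) := by
    by_contra h
    rw [not_nonempty_iff] at h
    have h0 : star φ ⬝ᵥ φ = 0 := by
      simp [dotProduct]
    rw [hφ] at h0
    exact one_ne_zero h0
  have hn : Nonempty (Fin n) := ⟨(Classical.arbitrary (Fin n × Fin m)).1⟩
  -- weights
  set w : Fin m → ℝ := fun j => ‖eu (col' φ j)‖ ^ 2 with hw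
  have hw0 : ∀ j, 0 ≤ w j := fun j => by positivity
  have hwc : ∀ j, ((w j : ℝ) : ℂ) = star (col' φ j) ⬝ᵥ (col' φ j) := fun j =>
    (ip_self_eq_normSq _).symm
  have hwsum : ∑ j, w j = 1 := by
    have h1 : ((∑ j, w j : ℝ) : ℂ) = 1 := by
      calc ((∑ j, w j : ℝ) : ℂ) = ∑ j, ((w j : ℝ) : ℂ) := Complex.ofReal_sum _ _
        _ = ∑ j, star (col' φ j) ⬝ᵥ (col' φ j) := Finset.sum_congr rfl fun j _ => hwc j
        _ = star φ ⬝ᵥ φ := (block_sum_self φ).symm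
        _ = 1 := hφ
    exact_mod_cast h1
  have hz : ∀ j : Fin m, ∃ zj ∈ numRange (ι := Fin n) V,
      (w j) • zj = star (col' φ j) ⬝ᵥ (V *ᵥ (col' φ j)) := by
    intro j
    by_cases h : col' φ j = 0
    · obtain ⟨z0, hz0⟩ := numRange_nonempty (ι := Fin n) V
      refine ⟨z0, hz0, ?_⟩
      have hwj : w j = 0 := by
        rw [hw]
        simp only [h]
        have : eu (0 : Fin n → ℂ) = 0 := rfl
        rw [this]
        simp
      rw [hwj, h]
      simp
    · refine ⟨(star (col' φ j) ⬝ᵥ (V *ᵥ (col' φ j))) / (star (col' φ j) ⬝ᵥ (col' φ j)),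
        mem_numRange_of_ne_zero V h, ?_⟩
      have hne : star (col' φ j) ⬝ᵥ (col' φ j) ≠ 0 := by
        rw [← hwc j]
        have : w j ≠ 0 := by
          have h4 : 0 < ‖eu (col' φ j)‖ := norm_pos_iff.mpr (eu_ne_zero h)
          show ‖eu (col' φ j)‖ ^ 2 ≠ 0
          positivity
        exact_mod_cast this
      rw [Complex.real_smul, hwc j]
      field_simp
  choose zf hzf hzval using hz
  have hmem : (star φ ⬝ᵥ ((V ⊗ₖ (1 : Matrix (Fin m) (Fin m) ℂ)) *ᵥ φ)) ∈ numRange V := by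
    have h2 : star φ ⬝ᵥ ((V ⊗ₖ (1 : Matrix (Fin m) (Fin m) ℂ)) *ᵥ φ)
        = ∑ j, (w j) • zf j := by
      rw [block_sum_ip]
      exact (Finset.sum_congr rfl fun j _ => (hzval j).symm)
    rw [h2]
    exact (numRange_convex V).sum_mem (fun j _ => hw0 j) hwsum (fun j _ => hzf j)
  obtain ⟨ψ, hψ, hψval⟩ := hmem
  have hbdd : BddBelow { r : ℝ | ∃ ψ : Fin n → ℂ, star ψ ⬝ᵥ ψ = 1 ∧
      r = ‖star ψ ⬝ᵥ ((U₁ᴴ * U₂) *ᵥ ψ)‖ } := by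
    refine ⟨0, ?_⟩
    rintro r ⟨ψ', hψ', rfl⟩
    exact norm_nonneg _
  have : ‖star φ ⬝ᵥ ((V ⊗ₖ (1 : Matrix (Fin m) (Fin m) ℂ)) *ᵥ φ)‖ ∈
      { r : ℝ | ∃ ψ : Fin n → ℂ, star ψ ⬝ᵥ ψ = 1 ∧
        r = ‖star ψ ⬝ᵥ ((U₁ᴴ * U₂) *ᵥ ψ)‖ } := ⟨ψ, hψ, by rw [hψval, hV]⟩
  exact csInf_le hbdd this

end TDaux

/-- Lemma 2, telescoped: in a `T`-query discrimination procedure the trace distance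
`D_k = 2√(1 - |⟨φ₁ᵏ, φ₂ᵏ⟩|²)` satisfies `D₀ = 0` and `D_T ≤ 2T√(1 - F(U₁,U₂)²)`. -/
theorem traceDist_telescoped (n m T : ℕ) (U₁ U₂ : Matrix (Fin n) (Fin n) ℂ)
    (hU₁ : U₁ ∈ Matrix.unitaryGroup (Fin n) ℂ) (hU₂ : U₂ ∈ Matrix.unitaryGroup (Fin n) ℂ)
    (φ₀ : Fin n × Fin m → ℂ) (hφ₀ : star φ₀ ⬝ᵥ φ₀ = 1)
    (W : ℕ → Matrix (Fin n × Fin m) (Fin n × Fin m) ℂ)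
    (hW : ∀ k ≤ T, W k ∈ Matrix.unitaryGroup (Fin n × Fin m) ℂ)
    (ψ₁ ψ₂ : ℕ → (Fin n × Fin m → ℂ))
    (hψ₁0 : ψ₁ 0 = W 0 *ᵥ φ₀) (hψ₂0 : ψ₂ 0 = W 0 *ᵥ φ₀)
    (hψ₁s : ∀ k < T, ψ₁ (k + 1) =
      W (k + 1) *ᵥ ((U₁ ⊗ₖ (1 : Matrix (Fin m) (Fin m) ℂ)) *ᵥ ψ₁ k))
    (hψ₂s : ∀ k < T, ψ₂ (k + 1) =
      W (k + 1) *ᵥ ((U₂ ⊗ₖ (1 : Matrix (Fin m) (Fin m) ℂ)) *ᵥ ψ₂ k))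
    (D : ℕ → ℝ)
    (hD : ∀ k, D k = 2 * Real.sqrt (1 - ‖star (ψ₁ k) ⬝ᵥ ψ₂ k‖ ^ 2)) :
    D 0 = 0 ∧ D T ≤ 2 * T * Real.sqrt (1 - unitaryFidelity n U₁ U₂ ^ 2) := by
  have hc0 : star (ψ₁ 0) ⬝ᵥ ψ₂ 0 = 1 := by
    rw [hψ₁0, hψ₂0, TDaux.ip_mulVec_unitary (hW 0 (Nat.zero_le T)), hφ₀]
  constructor
  · rw [hD 0, hc0]
    simp
  · set F := unitaryFidelity n U₁ U₂ with hF
    have hF0 : 0 ≤ F := TDaux.fidelity_nonneg n U₁ U₂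
    have hVu : U₁ᴴ * U₂ ∈ Matrix.unitaryGroup (Fin n) ℂ := by
      rw [← Matrix.star_eq_conjTranspose]
      exact mul_mem (Unitary.star_mem hU₁) hU₂
    have hkron : (U₁ᴴ * U₂) ⊗ₖ (1 : Matrix (Fin m) (Fin m) ℂ) ∈
        Matrix.unitaryGroup (Fin n × Fin m) ℂ := TDaux.kron_one_unitary hVu
    have hunit : ∀ k, k ≤ T → (star (ψ₁ k) ⬝ᵥ ψ₁ k = 1 ∧ star (ψ₂ k) ⬝ᵥ ψ₂ k = 1) := by
      intro k
      induction k with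
      | zero =>
        intro _
        constructor
        · rw [hψ₁0, TDaux.ip_mulVec_unitary (hW 0 (Nat.zero_le T)), hφ₀]
        · rw [hψ₂0, TDaux.ip_mulVec_unitary (hW 0 (Nat.zero_le T)), hφ₀]
      | succ k ih =>
        intro hk
        have hkT : k < T := Nat.lt_of_succ_le hk
        have ih' := ih (Nat.le_of_lt hkT)
        constructor
        · rw [hψ₁s k hkT, TDaux.ip_mulVec_unitary (hW (k+1) hk),
            TDaux.ip_mulVec_unitary (TDaux.kron_one_unitary hU₁)]
          exact ih'.1
        · rw [hψ₂s k hkT, TDaux.ip_mulVec_unitary (hW (k+1) hk),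
            TDaux.ip_mulVec_unitary (TDaux.kron_one_unitary hU₂)]
          exact ih'.2
    have hmain : ∀ k, k ≤ T →
        Real.sqrt (1 - ‖star (ψ₁ k) ⬝ᵥ ψ₂ k‖ ^ 2)
          ≤ k * Real.sqrt (1 - F ^ 2) := by
      intro k
      induction k with
      | zero =>
        intro _
        rw [hc0]
        simp
      | succ k ih =>
        intro hk
        have hkT : k < T := Nat.lt_of_succ_le hk
        have hk' : k ≤ T := Nat.le_of_lt hkT
        have ih' := ih hk'
        obtain ⟨h1u, h2u⟩ := hunit k hk'
        rw [hψ₁s k hkT, hψ₂s k hkT, TDaux.ip_mulVec_unitary (hW (k+1) hk), TDaux.step_eq]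
        have hcu : star ((((U₁ᴴ * U₂) ⊗ₖ (1 : Matrix (Fin m) (Fin m) ℂ)) *ᵥ ψ₂ k)) ⬝ᵥ
            ((((U₁ᴴ * U₂) ⊗ₖ (1 : Matrix (Fin m) (Fin m) ℂ))) *ᵥ ψ₂ k) = 1 := by
          rw [TDaux.ip_mulVec_unitary hkron]
          exact h2u
        have htri := TDaux.tri h1u h2u hcu
        have hFle := TDaux.fidelity_le U₁ U₂ h2u
        have h3 : Real.sqrt (1 - ‖star (ψ₂ k) ⬝ᵥ (((U₁ᴴ * U₂) ⊗ₖ (1 : Matrix (Fin m) (Fin m) ℂ)) *ᵥ ψ₂ k)‖ ^ 2)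
            ≤ Real.sqrt (1 - F ^ 2) := by
          apply Real.sqrt_le_sqrt
          have h4 := pow_le_pow_left₀ hF0 hFle 2
          linarith
        push_cast
        push_cast at ih'
        linarith
    have hT := hmain T le_rfl
    rw [hD T]
    calc 2 * Real.sqrt (1 - ‖star (ψ₁ T) ⬝ᵥ ψ₂ T‖ ^ 2)
        ≤ 2 * ((T : ℝ) * Real.sqrt (1 - F ^ 2)) := by linarith
      _ = 2 * T * Real.sqrt (1 - F ^ 2) := by ring
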